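/- Let E₁, E₂ be finite-dimensional Euclidean spaces and g : E₁ × E₂ → ℝ a continuous even function (g(−x,−y) = g(x,y)) bounded from below. Then −S₁(−Hg) ≤ H S₂ g pointwise on E₁ × E₂; equivalently, for all x, y, t, u, v, w one has Hg(t+x, y) + Hg(t−x, y) ≤ g(x+u, w+y+v) + g(−x−u, −w+y+v) + |u|² + |v|² + |w|² + |t|². -/
import Mathlib


open MeasureTheory Real

/-- The infimum convolution with the Euclidean quadratic cost on `E₁ × E₂`:
`Hg(x,y) = inf_{u,v} ( g(x+u, y+v) + ½|u|² + ½|v|² )`. -/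
noncomputable def H2 {E₁ E₂ : Type*} [NormedAddCommGroup E₁] [NormedAddCommGroup E₂]
    (g : E₁ → E₂ → ℝ) (x : E₁) (y : E₂) : ℝ :=
  ⨅ p : E₁ × E₂, (g (x + p.1) (y + p.2) + ‖p.1‖ ^ 2 / 2 + ‖p.2‖ ^ 2 / 2)

/-- The partial symmetrisation in the first variable:
`S₁g(x,y) = inf_u ( ½(g(u+x, y) + g(u−x, y)) + ½|u|² )`. -/
noncomputable def S1 {E₁ E₂ : Type*} [NormedAddCommGroup E₁]
    (g : E₁ → E₂ → ℝ) (x : E₁) (y : E₂) : ℝ :=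
  ⨅ u : E₁, ((g (u + x) y + g (u - x) y) / 2 + ‖u‖ ^ 2 / 2)

/-- The partial symmetrisation in the second variable:
`S₂g(x,y) = inf_v ( ½(g(x, v+y) + g(x, v−y)) + ½|v|² )`. -/
noncomputable def S2 {E₁ E₂ : Type*} [NormedAddCommGroup E₂]
    (g : E₁ → E₂ → ℝ) (x : E₁) (y : E₂) : ℝ :=
  ⨅ v : E₂, ((g x (v + y) + g x (v - y)) / 2 + ‖v‖ ^ 2 / 2)

/-- For a continuous, even, bounded-from-below `g` on `E₁ × E₂`, one has
`−S₁(−Hg) ≤ H S₂ g` pointwise; equivalently, for all `x, y, t, u, v, w`: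
`Hg(t+x, y) + Hg(t−x, y) ≤ g(x+u, w+y+v) + g(−x−u, −w+y+v) + |u|² + |v|² + |w|² + |t|²`. -/
theorem neg_S1_neg_H_le_H_S2 {E₁ E₂ : Type*}
    [NormedAddCommGroup E₁] [InnerProductSpace ℝ E₁] [FiniteDimensional ℝ E₁]
    [NormedAddCommGroup E₂] [InnerProductSpace ℝ E₂] [FiniteDimensional ℝ E₂]
    (g : E₁ → E₂ → ℝ) (hg_cont : Continuous (Function.uncurry g))
    (hg_even : ∀ x y, g (-x) (-y) = g x y)
    (hg_bdd : BddBelow (Set.range (Function.uncurry g))) :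
    (∀ (x : E₁) (y : E₂),
        -S1 (fun a b => -H2 g a b) x y ≤ H2 (S2 g) x y) ∧
      ∀ (x t u : E₁) (y v w : E₂),
        H2 g (t + x) y + H2 g (t - x) y ≤
          g (x + u) (w + y + v) + g (-x - u) (-w + y + v) +
            ‖u‖ ^ 2 + ‖v‖ ^ 2 + ‖w‖ ^ 2 + ‖t‖ ^ 2 := by
  obtain ⟨c, hc⟩ := hg_bdd
  have hcg : ∀ (a : E₁) (b : E₂), c ≤ g a b := fun a b => hc ⟨(a, b), rfl⟩
  have hbdd : ∀ (a : E₁) (b : E₂), BddBelow (Set.range fun p : E₁ × E₂ =>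
      g (a + p.1) (b + p.2) + ‖p.1‖ ^ 2 / 2 + ‖p.2‖ ^ 2 / 2) := by
    intro a b
    refine ⟨c, ?_⟩
    rintro r ⟨p, rfl⟩
    have h1 := hcg (a + p.1) (b + p.2)
    have h2 : (0:ℝ) ≤ ‖p.1‖ ^ 2 / 2 := by positivity
    have h3 : (0:ℝ) ≤ ‖p.2‖ ^ 2 / 2 := by positivity
    dsimp only
    linarith
  have hH : ∀ (a : E₁) (b : E₂) (p : E₁) (q : E₂),
      H2 g a b ≤ g (a + p) (b + q) + ‖p‖ ^ 2 / 2 + ‖q‖ ^ 2 / 2 := by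
    intro a b p q
    exact ciInf_le (hbdd a b) (p, q)
  have key : ∀ (x t u : E₁) (y v w : E₂),
      H2 g (t + x) y + H2 g (t - x) y ≤
        g (x + u) (w + y + v) + g (-x - u) (-w + y + v) +
          ‖u‖ ^ 2 + ‖v‖ ^ 2 + ‖w‖ ^ 2 + ‖t‖ ^ 2 := by
    intro x t u y v w
    have h1 := hH (t + x) y (u - t) (w + v)
    have h2 := hH (t - x) y (-u - t) (v - w)
    have e1 : t + x + (u - t) = x + u := by abel
    have e2 : y + (w + v) = w + y + v := by abel
    have e3 : t - x + (-u - t) = -x - u := by abel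
    have e4 : y + (v - w) = -w + y + v := by abel
    rw [e1, e2] at h1
    rw [e3, e4] at h2
    have n1 : ‖-u - t‖ = ‖u + t‖ := by rw [show -u - t = -(u + t) by abel, norm_neg]
    have n2 : ‖w + v‖ = ‖v + w‖ := by rw [add_comm]
    rw [n1] at h2
    rw [n2] at h1
    have pa := norm_add_sq_real u t
    have pb := norm_sub_sq_real u t
    have pc := norm_add_sq_real v w
    have pd := norm_sub_sq_real v w
    linarith
  refine ⟨?_, key⟩
  intro x y
  rw [neg_le, S1]
  apply le_ciInf
  intro t
  have hgoal : H2 g (t + x) y + H2 g (t - x) y - ‖t‖ ^ 2 ≤ 2 * H2 (S2 g) x y := by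
    have h2 : ∀ p : E₁ × E₂,
        (H2 g (t + x) y + H2 g (t - x) y - ‖t‖ ^ 2) / 2 ≤
          S2 g (x + p.1) (y + p.2) + ‖p.1‖ ^ 2 / 2 + ‖p.2‖ ^ 2 / 2 := by
      intro p
      have h3 : (H2 g (t + x) y + H2 g (t - x) y - ‖t‖ ^ 2) / 2
          - ‖p.1‖ ^ 2 / 2 - ‖p.2‖ ^ 2 / 2 ≤ S2 g (x + p.1) (y + p.2) := by
        rw [S2]
        apply le_ciInf
        intro w
        have hk := key x t p.1 y p.2 w
        have he : g (-x - p.1) (-w + y + p.2) = g (x + p.1) (w - (y + p.2)) := by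
          have := hg_even (x + p.1) (w - (y + p.2))
          rw [show -(x + p.1) = -x - p.1 by abel,
            show -(w - (y + p.2)) = -w + y + p.2 by abel] at this
          exact this
        rw [he] at hk
        rw [show w + y + p.2 = w + (y + p.2) by abel] at hk
        linarith
      linarith
    have hinf : (H2 g (t + x) y + H2 g (t - x) y - ‖t‖ ^ 2) / 2 ≤ H2 (S2 g) x y :=
      le_ciInf h2
    linarith
  linarith
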